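/- Let R₀ ≥ 0 and let r : ℝ → ℝ be C¹ with |r(t)| ≤ R₀ and |r′(t)| ≤ R₀ for all t. Fix σ, b > 0, set σ₀ = min{1, σ, b/2} and F₀ = b(σ + R₀) + R₀, and let x, y, z : [0,∞) → ℝ be differentiable functions satisfying x′ = −σx + σy, y′ = r(t)x − y − xz, z′ = −bz + xy for all t ≥ 0. Writing |v(t)| = (x(t)² + y(t)² + z(t)²)^{1/2}, then for every t ≥ 0, |v(t)| ≤ (|v(0)| + σ + R₀) e^{−σ₀ t} + F₀/√(2σ₀ b) + (σ + R₀). -/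

import Mathlib

open Real Set

private lemma sqrt_shift (p q u c : ℝ) (hp : 0 ≤ p) (hq : 0 ≤ q) :
    Real.sqrt (p + q + (u + c) ^ 2) ≤ Real.sqrt (p + q + u ^ 2) + |c| := by
  have hB : (0:ℝ) ≤ p + q + u ^ 2 := by positivity
  have hw : |u| ≤ Real.sqrt (p + q + u ^ 2) := Real.abs_le_sqrt (by nlinarith)
  have huc : u * c ≤ Real.sqrt (p + q + u ^ 2) * |c| := by
    calc u * c ≤ |u * c| := le_abs_self _
    _ = |u| * |c| := abs_mul _ _
    _ ≤ Real.sqrt (p + q + u ^ 2) * |c| := by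
        exact mul_le_mul_of_nonneg_right hw (abs_nonneg _)
  have h1 : p + q + (u + c) ^ 2 ≤ (Real.sqrt (p + q + u ^ 2) + |c|) ^ 2 := by
    have := Real.sq_sqrt hB
    nlinarith [sq_abs c]
  calc Real.sqrt (p + q + (u + c) ^ 2) ≤
      Real.sqrt ((Real.sqrt (p + q + u ^ 2) + |c|) ^ 2) := Real.sqrt_le_sqrt h1
    _ = Real.sqrt (p + q + u ^ 2) + |c| :=
        Real.sqrt_sq (by positivity)

private lemma sqrt_add_le' {a c : ℝ} (ha : 0 ≤ a) (hc : 0 ≤ c) :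
    Real.sqrt (a + c) ≤ Real.sqrt a + Real.sqrt c := by
  have h1 : a + c ≤ (Real.sqrt a + Real.sqrt c) ^ 2 := by
    have := Real.sq_sqrt ha
    have := Real.sq_sqrt hc
    nlinarith [Real.sqrt_nonneg a, Real.sqrt_nonneg c]
  calc Real.sqrt (a + c) ≤ Real.sqrt ((Real.sqrt a + Real.sqrt c) ^ 2) := Real.sqrt_le_sqrt h1
    _ = _ := Real.sqrt_sq (by positivity)

private lemma slope_freq {f : ℝ → ℝ} {d t : ℝ} (h : HasDerivWithinAt f d (Ioi t) t) :
    ∀ r, d < r → ∃ᶠ z in nhdsWithin t (Ioi t), (z - t)⁻¹ * (f z - f t) < r := by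
  intro r hr
  have hs := hasDerivWithinAt_iff_tendsto_slope.1 h
  rw [Set.diff_singleton_eq_self (by simp)] at hs
  have hev : ∀ᶠ z in nhdsWithin t (Ioi t), slope f t z < r :=
    hs.eventually_lt_const hr
  refine (hev.mono fun z hz => ?_).frequently
  rwa [slope_def_field, div_eq_inv_mul] at hz

set_option maxHeartbeats 1000000 in
/-- Uniform-in-time bound for the non-autonomous Lorenz system with `C¹` Rayleigh
parameter `r(t)` satisfying `|r(t)|, |r′(t)| ≤ R₀`: with `σ₀ = min{1, σ, b/2}` and
`F₀ = b(σ + R₀) + R₀`, every solution of `x′ = −σx + σy`, `y′ = r(t)x − y − xz`,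
`z′ = −bz + xy` on `[0,∞)` satisfies
`|v(t)| ≤ (|v(0)| + σ + R₀) e^{−σ₀t} + F₀/√(2σ₀b) + (σ + R₀)`. -/
theorem stmt18 (R₀ : ℝ) (hR₀ : 0 ≤ R₀)
    (r : ℝ → ℝ) (hr : ContDiff ℝ 1 r)
    (hrb : ∀ t : ℝ, |r t| ≤ R₀) (hrb' : ∀ t : ℝ, |deriv r t| ≤ R₀)
    (σ b : ℝ) (hσ : 0 < σ) (hb : 0 < b)
    (σ₀ F₀ : ℝ) (hσ₀ : σ₀ = min 1 (min σ (b / 2))) (hF₀ : F₀ = b * (σ + R₀) + R₀)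
    (x y z : ℝ → ℝ)
    (hx : ∀ t ≥ (0 : ℝ), HasDerivWithinAt x (-σ * x t + σ * y t) (Ici 0) t)
    (hy : ∀ t ≥ (0 : ℝ), HasDerivWithinAt y (r t * x t - y t - x t * z t) (Ici 0) t)
    (hz : ∀ t ≥ (0 : ℝ), HasDerivWithinAt z (-b * z t + x t * y t) (Ici 0) t) :
    ∀ t ≥ (0 : ℝ),
      Real.sqrt (x t ^ 2 + y t ^ 2 + z t ^ 2) ≤
        (Real.sqrt (x 0 ^ 2 + y 0 ^ 2 + z 0 ^ 2) + σ + R₀) * Real.exp (-σ₀ * t) +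
          F₀ / Real.sqrt (2 * σ₀ * b) + (σ + R₀) := by
  have hσ₀pos : 0 < σ₀ := by
    rw [hσ₀]; exact lt_min one_pos (lt_min hσ (by linarith))
  have hσ₀1 : σ₀ ≤ 1 := hσ₀ ▸ min_le_left _ _
  have hσ₀σ : σ₀ ≤ σ := hσ₀ ▸ (min_le_right _ _).trans (min_le_left _ _)
  have hσ₀b : 2 * σ₀ ≤ b := by
    have := hσ₀ ▸ (min_le_right 1 (min σ (b / 2))).trans (min_le_right σ (b / 2))
    linarith
  have hF₀nn : 0 ≤ F₀ := by rw [hF₀]; positivity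
  -- derivative of r
  have hrd : ∀ t, HasDerivAt r (deriv r t) t :=
    fun t => (hr.differentiable one_ne_zero t).hasDerivAt
  set w : ℝ → ℝ := fun t => z t - (σ + r t) with hwdef
  set F : ℝ → ℝ := fun t => -b * (σ + r t) - deriv r t with hFdef
  have hFb : ∀ t, |F t| ≤ F₀ := by
    intro t
    have h1 : |σ + r t| ≤ σ + R₀ := by
      have := abs_le.1 (hrb t)
      rw [abs_le]; constructor <;> nlinarith
    calc |F t| ≤ |(-b) * (σ + r t)| + |deriv r t| := abs_sub _ _
      _ = b * |σ + r t| + |deriv r t| := by rw [abs_mul, abs_neg, abs_of_pos hb]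
      _ ≤ b * (σ + R₀) + R₀ := by
          have := hrb' t
          have := mul_le_mul_of_nonneg_left h1 hb.le
          linarith
      _ = F₀ := hF₀.symm
  have hw : ∀ t ≥ (0:ℝ), HasDerivWithinAt w (-b * z t + x t * y t - deriv r t) (Ici 0) t :=
    fun t ht => (hz t ht).sub (((hrd t).const_add σ).hasDerivWithinAt)
  set V : ℝ → ℝ := fun t => x t ^ 2 + y t ^ 2 + w t ^ 2 with hVdef
  set G : ℝ → ℝ := fun t =>
    2 * x t * (-σ * x t + σ * y t) + 2 * y t * (r t * x t - y t - x t * z t)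
      + 2 * w t * (-b * z t + x t * y t - deriv r t) with hGdef
  have hV : ∀ t ≥ (0:ℝ), HasDerivWithinAt V (G t) (Ici 0) t := by
    intro t ht
    have := (((hx t ht).pow 2).add ((hy t ht).pow 2)).add ((hw t ht).pow 2)
    refine (show HasDerivWithinAt V _ (Ici 0) t from this).congr_deriv ?_
    simp only [hGdef, hwdef]
    push_cast
    ring
  have hVnn : ∀ t, 0 ≤ V t := fun t => by positivity
  -- the key differential inequality
  have bound : ∀ t ≥ (0:ℝ), G t ≤ -(2 * σ₀) * V t + F₀ ^ 2 / b := by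
    intro t _
    have hid : G t = -2 * σ * x t ^ 2 - 2 * y t ^ 2 - 2 * b * w t ^ 2 + 2 * F t * w t := by
      simp only [hGdef, hFdef, hwdef]; ring
    have key : (2 * F t * w t - 2 * b * w t ^ 2 + 2 * σ₀ * w t ^ 2) ≤ F₀ ^ 2 / b := by
      rw [le_div_iff₀ hb]
      have h1 := sq_nonneg (b * w t - F t)
      have h2 : F t ^ 2 ≤ F₀ ^ 2 := by
        have := hFb t
        nlinarith [abs_nonneg (F t), sq_abs (F t)]
      nlinarith [sq_nonneg (w t), mul_nonneg (sub_nonneg.2 hσ₀b) (sq_nonneg (w t))]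
    have hx2 : 2 * σ₀ * x t ^ 2 ≤ 2 * σ * x t ^ 2 := by nlinarith [sq_nonneg (x t)]
    have hy2 : 2 * σ₀ * y t ^ 2 ≤ 2 * y t ^ 2 := by nlinarith [sq_nonneg (y t)]
    rw [hid]
    simp only [hVdef]
    nlinarith
  -- Gronwall on [0, T]
  intro T hT
  have hIci : Icc (0:ℝ) T ⊆ Ici 0 := Icc_subset_Ici_self
  have hVc : ContinuousOn V (Icc 0 T) :=
    fun t ht => ((hV t ht.1).continuousWithinAt).mono hIci
  have hf' : ∀ t ∈ Ico (0:ℝ) T, ∀ ρ, G t < ρ →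
      ∃ᶠ ζ in nhdsWithin t (Ioi t), (ζ - t)⁻¹ * (V ζ - V t) < ρ := by
    intro t ht
    exact slope_freq ((hV t ht.1).mono fun s hs => le_trans ht.1 (le_of_lt hs))
  have H := le_gronwallBound_of_liminf_deriv_right_le hVc hf' (le_refl (V 0))
      (fun t ht => bound t ht.1) T (right_mem_Icc.2 hT)
  rw [sub_zero, gronwallBound_of_K_ne_0 (neg_ne_zero.2 (by positivity) : -(2*σ₀) ≠ 0)] at H
  set E : ℝ := Real.exp (-(2 * σ₀) * T) with hE
  have hE1 : E ≤ 1 := Real.exp_le_one_iff.2 (by nlinarith)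
  have hEpos : 0 < E := Real.exp_pos _
  have hC : (0:ℝ) ≤ F₀ ^ 2 / (2 * σ₀ * b) := by positivity
  have H2 : V T ≤ V 0 * E + F₀ ^ 2 / (2 * σ₀ * b) := by
    have heq : F₀ ^ 2 / b / -(2 * σ₀) * (E - 1) = F₀ ^ 2 / (2 * σ₀ * b) * (1 - E) := by
      field_simp; ring
    have hle : F₀ ^ 2 / (2 * σ₀ * b) * (1 - E) ≤ F₀ ^ 2 / (2 * σ₀ * b) := by
      nlinarith
    calc V T ≤ V 0 * E + F₀ ^ 2 / b / -(2 * σ₀) * (E - 1) := H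
      _ = V 0 * E + F₀ ^ 2 / (2 * σ₀ * b) * (1 - E) := by rw [heq]
      _ ≤ _ := by linarith
  -- take square roots
  have hsV : Real.sqrt (V T) ≤ Real.sqrt (V 0) * Real.exp (-σ₀ * T)
      + F₀ / Real.sqrt (2 * σ₀ * b) := by
    have h1 : Real.sqrt (V T) ≤ Real.sqrt (V 0 * E + F₀ ^ 2 / (2 * σ₀ * b)) :=
      Real.sqrt_le_sqrt H2
    have h2 : Real.sqrt (V 0 * E + F₀ ^ 2 / (2 * σ₀ * b)) ≤
        Real.sqrt (V 0 * E) + Real.sqrt (F₀ ^ 2 / (2 * σ₀ * b)) :=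
      sqrt_add_le' (by positivity) hC
    have h3 : Real.sqrt (V 0 * E) = Real.sqrt (V 0) * Real.exp (-σ₀ * T) := by
      have hEsq : E = (Real.exp (-σ₀ * T)) ^ 2 := by
        rw [sq, ← Real.exp_add, hE]; ring_nf
      rw [Real.sqrt_mul (hVnn 0), hEsq, Real.sqrt_sq (Real.exp_pos _).le]
    have h4 : Real.sqrt (F₀ ^ 2 / (2 * σ₀ * b)) = F₀ / Real.sqrt (2 * σ₀ * b) := by
      rw [show F₀ ^ 2 / (2 * σ₀ * b) = (F₀ / Real.sqrt (2 * σ₀ * b)) ^ 2 by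
        rw [div_pow, Real.sq_sqrt (by positivity)],
        Real.sqrt_sq (by positivity)]
    calc Real.sqrt (V T) ≤ _ := h1
      _ ≤ _ := h2
      _ = _ := by rw [h3, h4]
  -- relate V and x²+y²+z²
  have habs : ∀ t, |σ + r t| ≤ σ + R₀ := by
    intro t
    have := abs_le.1 (hrb t)
    rw [abs_le]; constructor <;> nlinarith
  have hzw : ∀ t, z t = w t + (σ + r t) := fun t => by simp [hwdef]
  have hup : Real.sqrt (x T ^ 2 + y T ^ 2 + z T ^ 2) ≤ Real.sqrt (V T) + (σ + R₀) := by
    calc Real.sqrt (x T ^ 2 + y T ^ 2 + z T ^ 2)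
        = Real.sqrt (x T ^ 2 + y T ^ 2 + (w T + (σ + r T)) ^ 2) := by rw [← hzw]
      _ ≤ Real.sqrt (V T) + |σ + r T| :=
          sqrt_shift _ _ _ _ (sq_nonneg _) (sq_nonneg _)
      _ ≤ _ := by linarith [habs T]
  have hdown : Real.sqrt (V 0) ≤ Real.sqrt (x 0 ^ 2 + y 0 ^ 2 + z 0 ^ 2) + (σ + R₀) := by
    have hw0 : w 0 = z 0 + (-(σ + r 0)) := by simp [hwdef]; ring
    calc Real.sqrt (V 0) = Real.sqrt (x 0 ^ 2 + y 0 ^ 2 + (z 0 + (-(σ + r 0))) ^ 2) := by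
          rw [hVdef]; rw [← hw0]
      _ ≤ Real.sqrt (x 0 ^ 2 + y 0 ^ 2 + z 0 ^ 2) + |(-(σ + r 0))| :=
          sqrt_shift _ _ _ _ (sq_nonneg _) (sq_nonneg _)
      _ ≤ _ := by rw [abs_neg]; linarith [habs 0]
  have hexp : 0 < Real.exp (-σ₀ * T) := Real.exp_pos _
  calc Real.sqrt (x T ^ 2 + y T ^ 2 + z T ^ 2) ≤ Real.sqrt (V T) + (σ + R₀) := hup
    _ ≤ Real.sqrt (V 0) * Real.exp (-σ₀ * T) + F₀ / Real.sqrt (2 * σ₀ * b) + (σ + R₀) := by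
        linarith
    _ ≤ (Real.sqrt (x 0 ^ 2 + y 0 ^ 2 + z 0 ^ 2) + σ + R₀) * Real.exp (-σ₀ * T)
        + F₀ / Real.sqrt (2 * σ₀ * b) + (σ + R₀) := by
        have := mul_le_mul_of_nonneg_right hdown hexp.le
        nlinarith
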